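/- arXiv:2005.00837 — 3 statements merged into one kernel-verified Lean document; each statement's English description precedes it below -/
import Mathlib

section
/- For α > -1, the weight w(x) = |x|_p^α on ℚ_p is doubling in the following sense: there exists a constant C > 0 such that for every x₀ ∈ ℚ_p and every k ∈ ℤ, the w-measure of the ball x₀ + 𝔓^{k-1} is at most C times the w-measure of the ball x₀ + 𝔓^k. Moreover, one may take C = max(p^{α+1}, (p-1)p^{α+1}/(p^{α+1}-1), p). -/
open MeasureTheory

section AuxDoubling
variable {p : ℕ} [hp : Fact p.Prime] [MeasurableSpace ℚ_[p]] [BorelSpace ℚ_[p]]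
  {μ : Measure ℚ_[p]} [μ.IsAddHaarMeasure]

lemma ball_decomp (j : ℤ) : Metric.closedBall (0:ℚ_[p]) ((p:ℝ)^(-j)) =
    ⋃ i ∈ Finset.range p, (fun x => x + (-((i:ℚ_[p]) * (p:ℚ_[p])^j))) ⁻¹'
      Metric.closedBall (0:ℚ_[p]) ((p:ℝ)^(-(j+1))) := by
  have hp1 : (1:ℝ) < p := by exact_mod_cast hp.out.one_lt
  have hq0 : (0:ℝ) < p := by positivity
  ext x
  simp only [Metric.mem_closedBall, dist_zero_right, Set.mem_iUnion, Set.mem_preimage,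
    Finset.mem_range, exists_prop]
  constructor
  · intro hx
    -- y = x * p^{-j}
    set y : ℚ_[p] := x * (p:ℚ_[p])^(-j) with hy
    have hpj : ‖(p:ℚ_[p])^(-j)‖ = (p:ℝ)^j := by
      rw [Padic.norm_p_zpow]; ring_nf
    have hyn : ‖y‖ ≤ 1 := by
      rw [hy, norm_mul, hpj]
      calc ‖x‖ * (p:ℝ)^j ≤ (p:ℝ)^(-j) * (p:ℝ)^j := by
            apply mul_le_mul_of_nonneg_right hx (by positivity)
        _ = 1 := by rw [← zpow_add₀ (ne_of_gt hq0)]; simp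
    obtain ⟨i, hip, hi⟩ : ∃ i : ℕ, i < p ∧ ‖y - i‖ ≤ (p:ℝ)⁻¹ := by
      set z : ℤ_[p] := ⟨y, hyn⟩
      refine ⟨z.zmodRepr, PadicInt.zmodRepr_lt_p z, ?_⟩
      have h := PadicInt.sub_zmodRepr_mem z
      rw [PadicInt.maximalIdeal_eq_span_p, Ideal.mem_span_singleton,
        ← PadicInt.norm_lt_one_iff_dvd] at h
      have : ‖z - (z.zmodRepr : ℤ_[p])‖ ≤ (p:ℝ)^(-1:ℤ) := by
        rw [PadicInt.norm_le_pow_iff_norm_lt_pow_add_one]; simpa using h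
      rw [PadicInt.norm_def] at this
      push_cast at this
      simpa using this
    refine ⟨i, hip, ?_⟩
    have hxy : x + -(((i:ℚ_[p])) * (p:ℚ_[p])^j) = (y - i) * (p:ℚ_[p])^j := by
      have hpz : ((p:ℚ_[p]))^(-j) * (p:ℚ_[p])^j = 1 := by
        rw [← zpow_add₀ (by exact_mod_cast hp.out.ne_zero : (p:ℚ_[p]) ≠ 0)]; simp
      rw [hy, sub_mul, mul_assoc, hpz, mul_one]; ring
    rw [hxy, norm_mul, Padic.norm_p_zpow]
    calc ‖y - i‖ * (p:ℝ)^(-j) ≤ (p:ℝ)⁻¹ * (p:ℝ)^(-j) :=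
          mul_le_mul_of_nonneg_right hi (by positivity)
      _ = (p:ℝ)^(-(j+1)) := by rw [← zpow_neg_one, ← zpow_add₀ (ne_of_gt hq0)]; ring_nf
  · rintro ⟨i, hip, hi⟩
    have h1 : ‖(i:ℚ_[p]) * (p:ℚ_[p])^j‖ ≤ (p:ℝ)^(-j) := by
      rw [norm_mul, Padic.norm_p_zpow]
      have : ‖((i:ℤ):ℚ_[p])‖ ≤ 1 := Padic.norm_int_le_one _
      push_cast at this
      exact mul_le_of_le_one_left (by positivity) this
    calc ‖x‖ = ‖(x + -((i:ℚ_[p]) * (p:ℚ_[p])^j)) + (i:ℚ_[p]) * (p:ℚ_[p])^j‖ := by ring_nf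
      _ ≤ max ‖x + -((i:ℚ_[p]) * (p:ℚ_[p])^j)‖ ‖(i:ℚ_[p]) * (p:ℚ_[p])^j‖ :=
          Padic.nonarchimedean _ _
      _ ≤ (p:ℝ)^(-j) := by
          apply max_le _ h1
          refine le_trans hi ?_
          exact zpow_le_zpow_right₀ hp1.le (by omega)

lemma meas_ball (hμ : μ (Metric.closedBall 0 1) = 1) (j : ℤ) :
    μ (Metric.closedBall (0:ℚ_[p]) ((p:ℝ)^(-j))) = ENNReal.ofReal ((p:ℝ)^(-j)) := by
  have hp1 : (1:ℝ) < p := by exact_mod_cast hp.out.one_lt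
  have hq0 : (0:ℝ) < p := by positivity
  have hpne : ((p:ENNReal)) ≠ 0 := by exact_mod_cast hp.out.ne_zero
  have hptop : ((p:ENNReal)) ≠ ⊤ := ENNReal.natCast_ne_top p
  have key : ∀ j : ℤ, μ (Metric.closedBall (0:ℚ_[p]) ((p:ℝ)^(-j)))
      = p * μ (Metric.closedBall (0:ℚ_[p]) ((p:ℝ)^(-(j+1)))) := by
    intro j
    rw [ball_decomp j]
    rw [measure_biUnion_finset ?disj (fun i _ => ?meas)]
    case meas =>
      exact (measurable_add_const _) measurableSet_closedBall
    case disj =>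
      intro i hi i' hi' hne
      simp only [Finset.mem_coe, Finset.mem_range] at hi hi'
      rw [Function.onFun, Set.disjoint_left]
      intro x hx hx'
      simp only [Set.mem_preimage, Metric.mem_closedBall, dist_zero_right] at hx hx'
      have hdiff : ‖((i:ℚ_[p]) - (i':ℚ_[p])) * (p:ℚ_[p])^j‖ ≤ (p:ℝ)^(-(j+1)) := by
        have heq : ((i:ℚ_[p]) - (i':ℚ_[p])) * (p:ℚ_[p])^j
            = (x + -((i':ℚ_[p]) * (p:ℚ_[p])^j)) + -(x + -((i:ℚ_[p]) * (p:ℚ_[p])^j)) := by ring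
        rw [heq]
        refine le_trans (Padic.nonarchimedean _ _) (max_le hx' ?_)
        rw [norm_neg]; exact hx
      have hnorm1 : ‖((i:ℚ_[p]) - (i':ℚ_[p]))‖ = 1 := by
        have hcast : ((i:ℚ_[p]) - (i':ℚ_[p])) = (((i:ℤ) - (i':ℤ) : ℤ) : ℚ_[p]) := by push_cast; ring
        rw [hcast]
        have hle := Padic.norm_int_le_one (p := p) ((i:ℤ) - (i':ℤ))
        rcases lt_or_eq_of_le hle with h | h
        · exfalso
          rw [Padic.norm_intCast_lt_one_iff] at h
          have h0 := Int.eq_zero_of_dvd_of_natAbs_lt_natAbs h (by simp [Int.natAbs_lt_iff_sq_lt]; omega)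
          omega
        · exact h
      rw [norm_mul, hnorm1, one_mul, Padic.norm_p_zpow] at hdiff
      have : (p:ℝ)^(-(j+1)) < (p:ℝ)^(-j) := zpow_lt_zpow_right₀ hp1 (by omega)
      linarith
    rw [Finset.sum_congr rfl (fun i _ => measure_preimage_add_right μ _ _)]
    simp [Finset.sum_const, mul_comm]
  induction j using Int.induction_on with
  | zero => simpa using hμ
  | succ n ih =>
    have h := key n
    rw [ih] at h
    have h2 : ENNReal.ofReal ((p:ℝ)^(-(n:ℤ))) = p * ENNReal.ofReal ((p:ℝ)^(-((n:ℤ)+1))) := by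
      rw [← ENNReal.ofReal_natCast, ← ENNReal.ofReal_mul (by positivity)]
      congr 1
      rw [show (p:ℝ) * (p:ℝ)^(-((n:ℤ)+1)) = (p:ℝ)^(1 + -((n:ℤ)+1)) by
        rw [zpow_add₀ (ne_of_gt hq0), zpow_one]]
      congr 1
      ring
    rw [h2] at h
    have h3 := (ENNReal.mul_right_inj hpne hptop).mp h.symm
    exact h3
  | pred n ih =>
    have h := key (-(n:ℤ) - 1)
    rw [show (-(n:ℤ)-1) + 1 = -(n:ℤ) by ring, ih] at h
    rw [h, ← ENNReal.ofReal_natCast, ← ENNReal.ofReal_mul (by positivity)]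
    congr 1
    rw [show (p:ℝ) * (p:ℝ)^(-(-(n:ℤ))) = (p:ℝ)^(1 + -(-(n:ℤ))) by
      rw [zpow_add₀ (ne_of_gt hq0), zpow_one]]
    congr 1
    push_cast
    ring

lemma wmeas (α : ℝ) : Measurable (fun x : ℚ_[p] => ‖x‖ ^ α) := by
  classical
  have : (fun x : ℚ_[p] => ‖x‖ ^ α)
      = fun x => if x = 0 then (0:ℝ)^α else Real.exp (Real.log ‖x‖ * α) := by
    funext x
    by_cases hx : x = 0
    · simp [hx]
    · rw [if_neg hx, Real.rpow_def_of_pos (norm_pos_iff.mpr hx)]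
  rw [this]
  exact Measurable.ite (measurableSet_singleton 0) measurable_const
    (Real.measurable_exp.comp ((Real.measurable_log.comp measurable_norm).mul_const α))

lemma norm_sphere {j : ℤ} {x : ℚ_[p]}
    (hx : x ∈ Metric.closedBall (0:ℚ_[p]) ((p:ℝ)^(-j)) \
      Metric.closedBall (0:ℚ_[p]) ((p:ℝ)^(-(j+1)))) : ‖x‖ = (p:ℝ)^(-j) := by
  have hp1 : (1:ℝ) < p := by exact_mod_cast hp.out.one_lt
  obtain ⟨hx1, hx2⟩ := hx
  rw [Metric.mem_closedBall, dist_zero_right] at hx1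
  rw [Metric.mem_closedBall, dist_zero_right, not_le] at hx2
  have hx0 : x ≠ 0 := by
    intro h
    rw [h, norm_zero] at hx2
    have : (0:ℝ) < (p:ℝ)^(-(j+1)) := by positivity
    linarith
  rw [Padic.norm_eq_zpow_neg_valuation hx0] at hx1 hx2 ⊢
  congr 1
  have h1 : j ≤ x.valuation := by
    have := (zpow_le_zpow_iff_right₀ hp1).mp hx1
    omega
  have h2 : x.valuation ≤ j := by
    by_contra h
    push_neg at h
    have : (p:ℝ)^(-x.valuation) ≤ (p:ℝ)^(-(j+1)) :=
      (zpow_le_zpow_iff_right₀ hp1).mpr (by omega)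
    linarith
  omega

lemma sphere_lint (hμ : μ (Metric.closedBall 0 1) = 1) (α : ℝ) (j : ℤ) :
    ∫⁻ x in Metric.closedBall (0:ℚ_[p]) ((p:ℝ)^(-j)) \
        Metric.closedBall (0:ℚ_[p]) ((p:ℝ)^(-(j+1))), ENNReal.ofReal (‖x‖ ^ α) ∂μ
    = ENNReal.ofReal (((p:ℝ)^(-j))^α * ((p:ℝ)^(-j) - (p:ℝ)^(-(j+1)))) := by
  have hp1 : (1:ℝ) < p := by exact_mod_cast hp.out.one_lt
  have hmeas : MeasurableSet (Metric.closedBall (0:ℚ_[p]) ((p:ℝ)^(-j)) \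
      Metric.closedBall (0:ℚ_[p]) ((p:ℝ)^(-(j+1)))) :=
    measurableSet_closedBall.diff measurableSet_closedBall
  rw [setLIntegral_congr_fun_ae hmeas (Filter.Eventually.of_forall
    (fun x hx => by rw [norm_sphere hx] :
      ∀ x, x ∈ _ → ENNReal.ofReal (‖x‖^α) = ENNReal.ofReal (((p:ℝ)^(-j))^α)))]
  rw [setLIntegral_const]
  rw [measure_diff (Metric.closedBall_subset_closedBall
      (zpow_le_zpow_right₀ hp1.le (by omega)))
    measurableSet_closedBall.nullMeasurableSet
    (by rw [meas_ball hμ]; exact ENNReal.ofReal_ne_top)]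
  rw [meas_ball hμ, meas_ball hμ, ← ENNReal.ofReal_sub _ (by positivity),
    ← ENNReal.ofReal_mul (by positivity)]

lemma partition (j : ℤ) :
    Metric.closedBall (0:ℚ_[p]) ((p:ℝ)^(-j)) \ {0}
      = ⋃ n : ℕ, (Metric.closedBall (0:ℚ_[p]) ((p:ℝ)^(-(j+n))) \
          Metric.closedBall (0:ℚ_[p]) ((p:ℝ)^(-(j+n+1)))) := by
  have hp1 : (1:ℝ) < p := by exact_mod_cast hp.out.one_lt
  ext x
  simp only [Set.mem_diff, Set.mem_singleton_iff, Set.mem_iUnion, Metric.mem_closedBall,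
    dist_zero_right, not_le]
  constructor
  · rintro ⟨hx1, hx0⟩
    have hval := Padic.norm_eq_zpow_neg_valuation hx0
    have hj : j ≤ x.valuation := by
      rw [hval] at hx1
      have := (zpow_le_zpow_iff_right₀ hp1).mp hx1
      omega
    refine ⟨(x.valuation - j).toNat, ?_, ?_⟩
    · rw [hval]
      apply zpow_le_zpow_right₀ hp1.le
      omega
    · rw [hval]
      apply zpow_lt_zpow_right₀ hp1
      omega
  · rintro ⟨n, hx1, hx2⟩
    have hx0 : x ≠ 0 := by
      intro h
      rw [h, norm_zero] at hx2
      have : (0:ℝ) < (p:ℝ)^(-(j+n+1)) := by positivity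
      linarith
    refine ⟨le_trans hx1 (zpow_le_zpow_right₀ hp1.le (by omega)), hx0⟩

lemma geom_term {q : ℝ} (hq : 1 < q) (α : ℝ) (j : ℤ) (n : ℕ) :
    (q^(-(j+n:ℤ)))^α * (q^(-(j+n:ℤ)) - q^(-((j+n:ℤ)+1)))
      = ((q^(-j))^α * (q^(-j) - q^(-(j+1)))) * (q ^ (-(α+1)))^n := by
  have hq0 : (0:ℝ) < q := by linarith
  have h1 : ∀ m : ℤ, (q:ℝ)^m = q ^ ((m:ℝ)) := fun m => (Real.rpow_intCast q m).symm
  simp only [h1]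
  rw [← Real.rpow_natCast (q ^ (-(α+1))) n, ← Real.rpow_mul hq0.le,
    ← Real.rpow_mul hq0.le, ← Real.rpow_mul hq0.le, mul_sub, mul_sub, sub_mul,
    ← Real.rpow_add hq0, ← Real.rpow_add hq0]
  simp only [← Real.rpow_add hq0]
  congr 1 <;> (congr 1; push_cast; ring)

lemma ball_int (hμ : μ (Metric.closedBall 0 1) = 1) {α : ℝ} (hα : -1 < α) (j : ℤ) :
    ∫ x in Metric.closedBall (0:ℚ_[p]) ((p:ℝ)^(-j)), ‖x‖ ^ α ∂μ
    = ((p:ℝ)^(-j))^α * ((p:ℝ)^(-j) - (p:ℝ)^(-(j+1))) * (1 - (p:ℝ) ^ (-(α+1)))⁻¹ := by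
  have hp1 : (1:ℝ) < p := by exact_mod_cast hp.out.one_lt
  have hq0 : (0:ℝ) < p := by linarith
  set q := (p:ℝ)
  have hr1 : q ^ (-(α+1)) < 1 := Real.rpow_lt_one_of_one_lt_of_neg hp1 (by linarith)
  have hr0 : 0 ≤ q ^ (-(α+1)) := Real.rpow_nonneg hq0.le _
  have hc0 : 0 ≤ (q^(-j))^α * (q^(-j) - q^(-(j+1))) := by
    apply mul_nonneg (Real.rpow_nonneg (by positivity) _)
    have : q^(-(j+1)) ≤ q^(-j) := zpow_le_zpow_right₀ hp1.le (by omega)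
    linarith
  -- lintegral computation
  have hlint : ∫⁻ x in Metric.closedBall (0:ℚ_[p]) ((p:ℝ)^(-j)), ENNReal.ofReal (‖x‖ ^ α) ∂μ
      = ENNReal.ofReal ((q^(-j))^α * (q^(-j) - q^(-(j+1))) * (1 - q ^ (-(α+1)))⁻¹) := by
    have hae : (Metric.closedBall (0:ℚ_[p]) ((p:ℝ)^(-j)) \ {0} : Set ℚ_[p])
        =ᵐ[μ] Metric.closedBall (0:ℚ_[p]) ((p:ℝ)^(-j)) := by
      rw [MeasureTheory.diff_ae_eq_self]
      exact measure_mono_null Set.inter_subset_right (measure_singleton 0)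
    rw [← Measure.restrict_congr_set hae, partition j,
      lintegral_iUnion (fun n => measurableSet_closedBall.diff measurableSet_closedBall) ?pd]
    case pd =>
      intro n m hnm
      rw [Function.onFun, Set.disjoint_left]
      intro x hx hx'
      have h1 := norm_sphere hx
      have h2 := norm_sphere hx'
      rw [h1] at h2
      have := (zpow_right_injective₀ hq0 (by linarith)) h2
      omega
    have hterm : ∀ n : ℕ, ∫⁻ x in Metric.closedBall (0:ℚ_[p]) ((p:ℝ)^(-(j+n))) \
        Metric.closedBall (0:ℚ_[p]) ((p:ℝ)^(-(j+n+1))), ENNReal.ofReal (‖x‖ ^ α) ∂μ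
        = ENNReal.ofReal ((q^(-j))^α * (q^(-j) - q^(-(j+1))))
          * (ENNReal.ofReal (q ^ (-(α+1))))^n := by
      intro n
      rw [sphere_lint hμ α (j+n), geom_term hp1 α j n, ENNReal.ofReal_mul hc0,
        ENNReal.ofReal_pow hr0]
    rw [tsum_congr hterm, ENNReal.tsum_mul_left, ENNReal.tsum_geometric,
      ← ENNReal.ofReal_one, ← ENNReal.ofReal_sub _ hr0,
      ← ENNReal.ofReal_inv_of_pos (by linarith), ← ENNReal.ofReal_mul hc0]
  rw [integral_eq_lintegral_of_nonneg_ae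
      (Filter.Eventually.of_forall (fun x => Real.rpow_nonneg (norm_nonneg x) α))
      ((wmeas α).aestronglyMeasurable), hlint, ENNReal.toReal_ofReal
      (mul_nonneg hc0 (inv_nonneg.mpr (by linarith)))]

lemma meas_transl (x₀ : ℚ_[p]) (r : ℝ) :
    μ (Metric.closedBall x₀ r) = μ (Metric.closedBall 0 r) := by
  have : Metric.closedBall x₀ r = (fun x => x + (-x₀)) ⁻¹' (Metric.closedBall 0 r) := by
    ext x
    simp [Metric.mem_closedBall, dist_eq_norm]
  rw [this, measure_preimage_add_right]

lemma norm_eq_of {a b : ℚ_[p]} (h : ‖a - b‖ < ‖b‖) : ‖a‖ = ‖b‖ := by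
  refine le_antisymm ?_ ?_
  · calc ‖a‖ = ‖(a - b) + b‖ := by ring_nf
      _ ≤ max ‖a - b‖ ‖b‖ := Padic.nonarchimedean _ _
      _ ≤ ‖b‖ := max_le h.le le_rfl
  · by_contra hc
    push_neg at hc
    have : ‖b‖ ≤ max ‖b - a‖ ‖a‖ := by
      calc ‖b‖ = ‖(b - a) + a‖ := by ring_nf
        _ ≤ max ‖b - a‖ ‖a‖ := Padic.nonarchimedean _ _
    rw [show b - a = -(a-b) by ring, norm_neg] at this
    rcases max_cases ‖a - b‖ ‖a‖ with ⟨he, _⟩ | ⟨he, _⟩ <;> rw [he] at this <;> linarith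

lemma ball_shift {x₀ : ℚ_[p]} {r : ℝ} (h : ‖x₀‖ ≤ r) :
    Metric.closedBall x₀ r = Metric.closedBall (0:ℚ_[p]) r := by
  ext x
  simp only [Metric.mem_closedBall, dist_eq_norm, dist_zero_right, sub_zero]
  constructor
  · intro hx
    calc ‖x‖ = ‖(x - x₀) + x₀‖ := by ring_nf
      _ ≤ max ‖x - x₀‖ ‖x₀‖ := Padic.nonarchimedean _ _
      _ ≤ r := max_le hx h
  · intro hx
    calc ‖x - x₀‖ = ‖x + -x₀‖ := by rw [sub_eq_add_neg]
      _ ≤ max ‖x‖ ‖-x₀‖ := Padic.nonarchimedean _ _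
      _ ≤ r := max_le hx (by rw [norm_neg]; exact h)

lemma const_int (hμ : μ (Metric.closedBall 0 1) = 1) (α : ℝ) {x₀ : ℚ_[p]} {j : ℤ}
    (h : (p:ℝ)^(-j) < ‖x₀‖) :
    ∫ x in Metric.closedBall x₀ ((p:ℝ)^(-j)), ‖x‖ ^ α ∂μ = ‖x₀‖^α * (p:ℝ)^(-j) := by
  rw [setIntegral_congr_fun measurableSet_closedBall
    (fun x hx => by
      rw [Metric.mem_closedBall, dist_eq_norm] at hx
      exact congrArg (· ^ α) (norm_eq_of (lt_of_le_of_lt hx h))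
      : Set.EqOn (fun x : ℚ_[p] => ‖x‖ ^ α) (fun _ => ‖x₀‖ ^ α) _)]
  rw [setIntegral_const, measureReal_def, meas_transl, meas_ball hμ, ENNReal.toReal_ofReal (by positivity),
    smul_eq_mul, mul_comm]

end AuxDoubling

/-- For `α > -1`, the weight `w(x) = |x|_p^α` on `ℚ_p` is doubling: for every
`x₀ ∈ ℚ_p` and `k ∈ ℤ`, the `w`-measure of `x₀ + 𝔓^{k-1}` is at most
`C = max(p^{α+1}, (p-1)p^{α+1}/(p^{α+1}-1), p)` times the `w`-measure of `x₀ + 𝔓^k`. -/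
theorem stmt_5 (p : ℕ) [Fact p.Prime]
    [MeasurableSpace ℚ_[p]] [BorelSpace ℚ_[p]]
    (μ : Measure ℚ_[p]) [μ.IsAddHaarMeasure]
    (hμ : μ (Metric.closedBall 0 1) = 1)
    (α : ℝ) (hα : -1 < α) (x₀ : ℚ_[p]) (k : ℤ) :
    ∫ x in {x : ℚ_[p] | ‖x - x₀‖ ≤ (p : ℝ) ^ (-(k - 1))}, ‖x‖ ^ α ∂μ ≤
      max ((p : ℝ) ^ (α + 1))
        (max (((p : ℝ) - 1) * (p : ℝ) ^ (α + 1) / ((p : ℝ) ^ (α + 1) - 1)) (p : ℝ)) *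
      ∫ x in {x : ℚ_[p] | ‖x - x₀‖ ≤ (p : ℝ) ^ (-k)}, ‖x‖ ^ α ∂μ := by
  have hp1 : (1:ℝ) < p := by exact_mod_cast (Fact.out : p.Prime).one_lt
  have hq0 : (0:ℝ) < p := by linarith
  set q : ℝ := (p:ℝ) with hq
  have hQ1 : 1 < q ^ (α+1) := Real.one_lt_rpow_iff_of_pos hq0 |>.mpr (Or.inl ⟨hp1, by linarith⟩)
  have hQ0 : (0:ℝ) < q ^ (α+1) := by linarith
  have hrQ : q ^ (-(α+1)) = (q ^ (α+1))⁻¹ := by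
    rw [Real.rpow_neg hq0.le]
  have hD0 : (0:ℝ) < 1 - q ^ (-(α+1)) := by
    rw [hrQ]
    have : (q ^ (α+1))⁻¹ < 1 := by
      rw [inv_lt_one_iff₀]; right; exact hQ1
    linarith
  -- sets are closed balls
  have hset : ∀ j : ℤ, {x : ℚ_[p] | ‖x - x₀‖ ≤ q ^ (-j)} = Metric.closedBall x₀ (q ^ (-j)) := by
    intro j
    ext x
    simp [Metric.mem_closedBall, dist_eq_norm]
  rw [show (-(k-1) : ℤ) = -(k-1) by rfl]
  have hsetk : {x : ℚ_[p] | ‖x - x₀‖ ≤ q ^ (-k)} = Metric.closedBall x₀ (q ^ (-k)) := hset k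
  have hsetk1 : {x : ℚ_[p] | ‖x - x₀‖ ≤ q ^ (-(k-1))} = Metric.closedBall x₀ (q ^ (-(k-1))) :=
    hset (k-1)
  rw [hsetk, hsetk1]
  -- the W values
  set W : ℤ → ℝ := fun j => ((q^(-j))^α * (q^(-j) - q^(-(j+1)))) * (1 - q ^ (-(α+1)))⁻¹ with hW
  have hWnn : ∀ j : ℤ, 0 ≤ W j := by
    intro j
    apply mul_nonneg (mul_nonneg (Real.rpow_nonneg (by positivity) _) ?_)
      (inv_nonneg.mpr hD0.le)
    have : q^(-(j+1)) ≤ q^(-j) := zpow_le_zpow_right₀ hp1.le (by omega)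
    linarith
  have hWrel : ∀ j : ℤ, W (j-1) = q ^ (α+1) * W j := by
    intro j
    have hg := geom_term hp1 α (j-1) 1
    have he1 : ((j-1) + (1:ℕ) : ℤ) = j := by push_cast; ring
    rw [he1] at hg
    have : W j = W (j-1) * q ^ (-(α+1)) := by
      rw [hW]
      simp only []
      rw [hg]
      ring
    rw [this]
    have hQne : q ^ (α+1) ≠ 0 := ne_of_gt hQ0
    rw [hrQ]
    field_simp
  set C : ℝ := max (q ^ (α + 1)) (max ((q - 1) * q ^ (α + 1) / (q ^ (α + 1) - 1)) q) with hC
  by_cases h1 : ‖x₀‖ ≤ q ^ (-k)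
  · -- Case A : both balls centered at 0
    have hx1 : ‖x₀‖ ≤ q ^ (-(k-1)) :=
      le_trans h1 (zpow_le_zpow_right₀ hp1.le (by omega))
    rw [ball_shift h1, ball_shift hx1, ball_int hμ hα, ball_int hμ hα]
    have : ((q^(-(k-1)))^α * (q^(-(k-1)) - q^(-((k-1)+1)))) * (1 - q ^ (-(α+1)))⁻¹ = W (k-1) := rfl
    rw [this, show ((q^(-k))^α * (q^(-k) - q^(-(k+1)))) * (1 - q ^ (-(α+1)))⁻¹ = W k from rfl,
      hWrel k]
    exact mul_le_mul_of_nonneg_right (le_max_left _ _) (hWnn k)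
  · push_neg at h1
    by_cases h2 : ‖x₀‖ ≤ q ^ (-(k-1))
    · -- Case B
      have hx0 : x₀ ≠ 0 := by
        intro h
        rw [h, norm_zero] at h1
        have : (0:ℝ) < q^(-k) := by positivity
        linarith
      have hval : ‖x₀‖ = q ^ (-(k-1)) := by
        rw [Padic.norm_eq_zpow_neg_valuation hx0] at h1 h2 ⊢
        congr 1
        have ha := (zpow_le_zpow_iff_right₀ hp1).mp h2
        have hb : ¬ ((-x₀.valuation : ℤ) ≤ -k) := by
          intro hcon
          have := zpow_le_zpow_right₀ hp1.le hcon
          linarith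
        omega
      rw [ball_shift h2, ball_int hμ hα, const_int hμ α h1, hval]
      have hsmall : (q ^ (-(k-1)))^α * q^(-k) ≥ 0 := by positivity
      have hkey : ((q^(-(k-1)))^α * (q^(-(k-1)) - q^(-((k-1)+1)))) * (1 - q ^ (-(α+1)))⁻¹
          = ((q - 1) * q ^ (α + 1) / (q ^ (α + 1) - 1)) * ((q ^ (-(k-1)))^α * q^(-k)) := by
        have he : ((k:ℤ)-1) + 1 = k := by ring
        rw [he]
        have hsplit : q^(-(k-1)) - q^(-k) = q^(-k) * (q - 1) := by
          rw [show (-(k-1) : ℤ) = -k + 1 by ring, zpow_add₀ (ne_of_gt hq0), zpow_one]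
          ring
        rw [hsplit, hrQ]
        have h3 : q ^ (α+1) ≠ 0 := ne_of_gt hQ0
        have h4 : q ^ (α+1) - 1 ≠ 0 := by linarith
        field_simp
      rw [hkey]
      apply mul_le_mul_of_nonneg_right _ hsmall
      exact le_trans (le_max_left _ _) (le_max_right _ _)
    · -- Case C
      push_neg at h2
      have h1' : q ^ (-k) < ‖x₀‖ := h1
      rw [const_int hμ α h2, const_int hμ α h1]
      have : ‖x₀‖^α * q^(-(k-1)) = q * (‖x₀‖^α * q^(-k)) := by
        rw [show (-(k-1) : ℤ) = -k + 1 by ring, zpow_add₀ (ne_of_gt hq0), zpow_one]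
        ring
      rw [this]
      apply mul_le_mul_of_nonneg_right _ (by positivity)
      exact le_trans (le_max_right _ _) (le_max_right _ _)
end

section
/- Let φ ∈ L^1(ℚ_p) be a compactly supported integrable simple function (finite linear combination of indicator functions of balls) such that φ(x + y) = φ(x) whenever |y|_p < |x|_p. Then its Fourier transform satisfies φ̂(x + y) = φ̂(x) whenever |y|_p < |x|_p. -/
open MeasureTheory

/-- Let `φ ∈ L¹(ℚ_p)` be a compactly supported integrable simple function (a finite
linear combination of indicator functions of balls) such that `φ(x+y) = φ(x)` whenever
`|y|_p < |x|_p`. Then its Fourier transform `φ̂(u) = ∫ φ(x) χ(ux)‾ dx` satisfies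
`φ̂(x+y) = φ̂(x)` whenever `|y|_p < |x|_p`. -/
theorem stmt_9 (p : ℕ) [Fact p.Prime]
    [MeasurableSpace ℚ_[p]] [BorelSpace ℚ_[p]]
    (μ : Measure ℚ_[p]) [μ.IsAddHaarMeasure]
    (hμ : μ (Metric.closedBall 0 1) = 1)
    (χ : ℚ_[p] → ℂ)
    (hχadd : ∀ x y, χ (x + y) = χ x * χ y)
    (hχtriv : ∀ x : ℚ_[p], ‖x‖ ≤ 1 → χ x = 1)
    (hχnontriv : ∃ x : ℚ_[p], ‖x‖ ≤ (p : ℝ) ∧ χ x ≠ 1)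
    (φ : ℚ_[p] → ℂ) (hφint : Integrable φ μ)
    (hsimple : ∃ (n : ℕ) (c : Fin n → ℂ) (z : Fin n → ℚ_[p]) (m : Fin n → ℤ),
        ∀ x, φ x = ∑ i, c i * (if ‖x - z i‖ ≤ (p : ℝ) ^ (m i) then 1 else 0))
    (hconst : ∀ x y : ℚ_[p], ‖y‖ < ‖x‖ → φ (x + y) = φ x) :
    ∀ x y : ℚ_[p], ‖y‖ < ‖x‖ →
      (∫ t, φ t * (starRingEnd ℂ) (χ ((x + y) * t)) ∂μ)
        = ∫ t, φ t * (starRingEnd ℂ) (χ (x * t)) ∂μ := by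
  intro x y hxy
  have hxn : (0:ℝ) < ‖x‖ := lt_of_le_of_lt (norm_nonneg y) hxy
  have hx : x ≠ 0 := by simpa using hxn.ne'
  set a : ℚ_[p] := 1 + y / x with ha_def
  have hyx : ‖y / x‖ < 1 := by
    rw [norm_div]
    exact (div_lt_one hxn).mpr hxy
  have hna : ‖a‖ = 1 := by
    have hne : ‖y / x‖ ≠ ‖(1:ℚ_[p])‖ := by rw [norm_one]; exact hyx.ne
    rw [ha_def, add_comm]
    rw [Padic.add_eq_max_of_ne hne, norm_one, max_eq_right hyx.le]
  have ha : a ≠ 0 := by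
    intro h; rw [h] at hna; simp at hna
  have hax : x * a = x + y := by
    rw [ha_def, mul_add, mul_one]; congr 1; field_simp
  -- the additive equivalence given by multiplication by `a`
  let e : ℚ_[p] ≃+ ℚ_[p] :=
    { Equiv.mulLeft₀ a ha with map_add' := mul_add a }
  have hec : Continuous e := continuous_const.mul continuous_id
  have hecs : Continuous e.symm := by
    have : (e.symm : ℚ_[p] → ℚ_[p]) = fun t => a⁻¹ * t := by
      funext t; rfl
    rw [this]
    exact continuous_const.mul continuous_id
  have hmapHaar : (μ.map e).IsAddHaarMeasure :=
    e.isAddHaarMeasure_map μ hec hecs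
  have hmeas : Measurable (fun t : ℚ_[p] => a * t) := hec.measurable
  -- the map `t ↦ a * t` preserves the closed unit ball
  have hball : (fun t : ℚ_[p] => a * t) ⁻¹' Metric.closedBall 0 1
      = Metric.closedBall 0 1 := by
    ext t
    simp [Metric.mem_closedBall, dist_eq_norm, norm_mul, hna]
  have he : (e : ℚ_[p] → ℚ_[p]) = fun t => a * t := rfl
  have hmapball : (μ.map e) (Metric.closedBall 0 1) = 1 := by
    rw [he, Measure.map_apply hmeas (measurableSet_closedBall), hball, hμ]
  -- uniqueness of Haar measure: `μ.map e = μ`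
  have huniq : μ.map e = μ := by
    have h := Measure.isAddLeftInvariant_eq_smul (μ.map e) μ
    have hc : (μ.map e) (Metric.closedBall 0 1)
        = (Measure.addHaarScalarFactor (μ.map e) μ : ENNReal) * μ (Metric.closedBall 0 1) := by
      conv_lhs => rw [h]
      rw [Measure.smul_apply, ENNReal.smul_def, smul_eq_mul]
    rw [hμ, hmapball, mul_one] at hc
    rw [h]
    have h1 : Measure.addHaarScalarFactor (μ.map e) μ = 1 := by
      exact_mod_cast hc.symm
    rw [h1, one_smul]
  have hmp : MeasurePreserving (fun t : ℚ_[p] => a * t) μ μ := ⟨hmeas, huniq⟩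
  have hemb : MeasurableEmbedding (fun t : ℚ_[p] => a * t) :=
    (Homeomorph.mulLeft₀ a ha).measurableEmbedding
  -- `φ` is invariant under multiplication by `a`
  have hφa : ∀ t : ℚ_[p], φ (a * t) = φ t := by
    intro t
    rcases eq_or_ne t 0 with rfl | ht
    · simp
    · have h1 : a * t - t = (y / x) * t := by rw [ha_def]; ring
      have h2 : ‖a * t - t‖ < ‖t‖ := by
        rw [h1, norm_mul]
        calc ‖y / x‖ * ‖t‖ < 1 * ‖t‖ := by
              exact mul_lt_mul_of_pos_right hyx (norm_pos_iff.mpr ht)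
          _ = ‖t‖ := one_mul _
      have := hconst t (a * t - t) h2
      rwa [add_sub_cancel] at this
  calc (∫ t, φ t * (starRingEnd ℂ) (χ ((x + y) * t)) ∂μ)
      = ∫ t, φ (a * t) * (starRingEnd ℂ) (χ (x * (a * t))) ∂μ := by
        congr 1; funext t
        rw [hφa, ← mul_assoc, hax]
    _ = ∫ t, φ t * (starRingEnd ℂ) (χ (x * t)) ∂μ :=
        hmp.integral_comp hemb (fun u => φ u * (starRingEnd ℂ) (χ (x * u)))
end

section
/- Let Ω ⊆ ℚ_p be a Borel set of positive finite Haar measure, S ⊆ ℚ_p a set such that {χ_s|_Ω : s ∈ S} is an orthonormal basis of L²(Ω), and φ ∈ L²(ℚ_p) with φ̂ supported in Ω and |φ̂| = 1 a.e. on Ω. Then {φ(· - s) : s ∈ S} is an orthonormal basis of the closed linear span V of {φ(· - s) : s ∈ S} in L²(ℚ_p). -/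
open MeasureTheory
open scoped Classical

private lemma aux_integrable_mul {α : Type*} [MeasurableSpace α] {μ : Measure α} {f g : α → ℂ}
    (hf : MemLp f 2 μ) (hg : MemLp g 2 μ) :
    Integrable (fun x => f x * (starRingEnd ℂ) (g x)) μ := by
  have h := L2.integrable_inner (𝕜 := ℂ) (hg.toLp g) (hf.toLp f)
  refine (integrable_congr ?_).mp h
  filter_upwards [hg.coeFn_toLp, hf.coeFn_toLp] with x hx hy
  simp [RCLike.inner_apply, hx, hy, mul_comm]

private lemma aux_cs {α : Type*} [MeasurableSpace α] {μ : Measure α} {f g : α → ℂ}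
    (hf : MemLp f 2 μ) (hg : MemLp g 2 μ) :
    ‖∫ x, f x * (starRingEnd ℂ) (g x) ∂μ‖ ≤
      Real.sqrt (∫ x, ‖f x‖ ^ 2 ∂μ) * Real.sqrt (∫ x, ‖g x‖ ^ 2 ∂μ) := by
  have hpq : (2:ℝ).HolderConjugate 2 := by constructor <;> norm_num
  have h2 : ENNReal.ofReal (2:ℝ) = 2 := by norm_num
  have hrw : ∀ h : α → ℂ, (∫ x, ‖h x‖ ^ (2:ℝ) ∂μ) = ∫ x, ‖h x‖ ^ 2 ∂μ := by
    intro h; congr 1; ext x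
    rw [show (2:ℝ) = ((2:ℕ):ℝ) by norm_num, Real.rpow_natCast]
  have hH := integral_mul_le_Lp_mul_Lq_of_nonneg (μ := μ) hpq
    (Filter.Eventually.of_forall fun x => norm_nonneg (f x))
    (Filter.Eventually.of_forall fun x => norm_nonneg (g x))
    (h2 ▸ hf.norm) (h2 ▸ hg.norm)
  rw [hrw, hrw] at hH
  calc ‖∫ x, f x * (starRingEnd ℂ) (g x) ∂μ‖
      ≤ ∫ x, ‖f x * (starRingEnd ℂ) (g x)‖ ∂μ := norm_integral_le_integral_norm _
    _ = ∫ x, ‖f x‖ * ‖g x‖ ∂μ := by simp [norm_mul]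
    _ ≤ (∫ x, ‖f x‖ ^ 2 ∂μ) ^ (1/(2:ℝ)) * (∫ x, ‖g x‖ ^ 2 ∂μ) ^ (1/(2:ℝ)) := hH
    _ = Real.sqrt (∫ x, ‖f x‖ ^ 2 ∂μ) * Real.sqrt (∫ x, ‖g x‖ ^ 2 ∂μ) := by
        rw [Real.sqrt_eq_rpow, Real.sqrt_eq_rpow]

/-- Let `Ω ⊆ ℚ_p` be Borel with `0 < μ(Ω) < ∞`, let `S ⊆ ℚ_p` be such that
`{χ_s|_Ω : s ∈ S}` is an orthonormal basis of `L²(Ω)`, and let `φ ∈ L²(ℚ_p)` with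
`φ̂` supported in `Ω` and `|φ̂| = 1` a.e. on `Ω` (here `F` is the Fourier transform,
an `L²` isometry with `F(φ(· - s)) = χ_s‾ · Fφ`). Then `{φ(· - s) : s ∈ S}` is an
orthonormal basis of the closed linear span `V` of `{φ(· - s) : s ∈ S}` in `L²(ℚ_p)`:
it is orthonormal, and any element of `V` orthogonal to every `φ(· - s)` vanishes a.e. -/
theorem stmt_19 (p : ℕ) [Fact p.Prime]
    [MeasurableSpace ℚ_[p]] [BorelSpace ℚ_[p]]
    (μ : Measure ℚ_[p]) [μ.IsAddHaarMeasure]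
    (hμ : μ (Metric.closedBall 0 1) = 1)
    (χ : ℚ_[p] → ℂ)
    (hχadd : ∀ x y, χ (x + y) = χ x * χ y)
    (hχtriv : ∀ x : ℚ_[p], ‖x‖ ≤ 1 → χ x = 1)
    (hχnontriv : ∃ x : ℚ_[p], ‖x‖ ≤ (p : ℝ) ∧ χ x ≠ 1)
    (Ω : Set ℚ_[p]) (hΩmeas : MeasurableSet Ω)
    (hΩpos : 0 < μ Ω) (hΩfin : μ Ω < ⊤)
    (S : Set ℚ_[p])
    -- {χ_s|_Ω : s ∈ S} is orthonormal in L²(Ω)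
    (hSon : ∀ s ∈ S, ∀ t ∈ S,
        ∫ x in Ω, χ (s * x) * (starRingEnd ℂ) (χ (t * x)) ∂μ
          = if s = t then 1 else 0)
    -- and complete in L²(Ω)
    (hScomplete : ∀ g : ℚ_[p] → ℂ, MemLp g 2 (μ.restrict Ω) →
        (∀ s ∈ S, ∫ x in Ω, g x * (starRingEnd ℂ) (χ (s * x)) ∂μ = 0) →
        ∀ᵐ x ∂μ.restrict Ω, g x = 0)
    -- the Fourier transform: an L² "isometry" (Plancherel) intertwining translations
    (F : (ℚ_[p] → ℂ) → (ℚ_[p] → ℂ))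
    (hFplancherel : ∀ f g : ℚ_[p] → ℂ, MemLp f 2 μ → MemLp g 2 μ →
        ∫ x, f x * (starRingEnd ℂ) (g x) ∂μ
          = ∫ ξ, F f ξ * (starRingEnd ℂ) (F g ξ) ∂μ)
    (hFtranslate : ∀ (f : ℚ_[p] → ℂ) (s : ℚ_[p]), MemLp f 2 μ →
        ∀ᵐ ξ ∂μ, F (fun x => f (x - s)) ξ = (starRingEnd ℂ) (χ (s * ξ)) * F f ξ)
    (φ : ℚ_[p] → ℂ) (hφ : MemLp φ 2 μ)
    (hφsupp : ∀ᵐ ξ ∂μ, ξ ∉ Ω → F φ ξ = 0)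
    (hφmod : ∀ᵐ ξ ∂μ, ξ ∈ Ω → ‖F φ ξ‖ = 1) :
    -- orthonormality of the translates
    (∀ s ∈ S, ∀ t ∈ S,
        ∫ x, φ (x - s) * (starRingEnd ℂ) (φ (x - t)) ∂μ
          = if s = t then 1 else 0) ∧
    -- completeness in V = closed span of the translates
    (∀ f : ℚ_[p] → ℂ, MemLp f 2 μ →
        (∀ ε : ℝ, 0 < ε → ∃ (n : ℕ) (c : Fin n → ℂ) (σ : Fin n → ℚ_[p]),
          (∀ i, σ i ∈ S) ∧
          (∫ x, ‖f x - ∑ i, c i * φ (x - σ i)‖ ^ 2 ∂μ) < ε) →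
        (∀ s ∈ S, ∫ x, f x * (starRingEnd ℂ) (φ (x - s)) ∂μ = 0) →
        ∀ᵐ x ∂μ, f x = 0) := by
  have htrans : ∀ s : ℚ_[p], MemLp (fun x => φ (x - s)) 2 μ := fun s =>
    hφ.comp_measurePreserving (measurePreserving_sub_right μ s)
  constructor
  · -- orthonormality
    intro s hs t ht
    rw [hFplancherel _ _ (htrans s) (htrans t)]
    have hmain : ∫ ξ, F (fun x => φ (x - s)) ξ * (starRingEnd ℂ) (F (fun x => φ (x - t)) ξ) ∂μ
        = ∫ ξ, Ω.indicator (fun ξ => χ (t * ξ) * (starRingEnd ℂ) (χ (s * ξ))) ξ ∂μ := by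
      refine integral_congr_ae ?_
      filter_upwards [hFtranslate φ s hφ, hFtranslate φ t hφ, hφsupp, hφmod]
        with ξ e1 e2 esupp emod
      rw [e1, e2]
      by_cases hξ : ξ ∈ Ω
      · rw [Set.indicator_of_mem hξ]
        have hm : F φ ξ * (starRingEnd ℂ) (F φ ξ) = 1 := by
          rw [Complex.mul_conj]
          norm_cast
          rw [Complex.normSq_eq_norm_sq, emod hξ, one_pow]
        calc (starRingEnd ℂ) (χ (s * ξ)) * F φ ξ *
              (starRingEnd ℂ) ((starRingEnd ℂ) (χ (t * ξ)) * F φ ξ)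
            = χ (t * ξ) * (starRingEnd ℂ) (χ (s * ξ)) *
                (F φ ξ * (starRingEnd ℂ) (F φ ξ)) := by
              simp only [map_mul, Complex.conj_conj]; ring
          _ = χ (t * ξ) * (starRingEnd ℂ) (χ (s * ξ)) := by rw [hm, mul_one]
      · rw [Set.indicator_of_notMem hξ, esupp hξ]
        simp
    rw [hmain, integral_indicator hΩmeas, hSon t ht s hs]
    by_cases h : s = t
    · simp [h]
    · simp [h, Ne.symm h]
  · -- completeness
    intro f hf happrox horth
    set N := ∫ x, ‖f x‖ ^ 2 ∂μ with hNdef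
    have hNnonneg : 0 ≤ N := integral_nonneg fun x => sq_nonneg _
    have hfN : ∫ x, f x * (starRingEnd ℂ) (f x) ∂μ = (N : ℂ) := by
      have hstep : ∫ x, f x * (starRingEnd ℂ) (f x) ∂μ
          = ∫ x, ((‖f x‖ ^ 2 : ℝ) : ℂ) ∂μ := by
        refine integral_congr_ae (Filter.Eventually.of_forall fun x => ?_)
        dsimp only
        rw [Complex.mul_conj]
        norm_cast
        rw [Complex.normSq_eq_norm_sq]
      rw [hstep, hNdef]
      exact integral_ofReal
    have key : ∀ ε : ℝ, 0 < ε → N ≤ Real.sqrt N * Real.sqrt ε := by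
      intro ε hε
      obtain ⟨n, c, σ, hσ, happ⟩ := happrox ε hε
      set g : ℚ_[p] → ℂ := fun x => ∑ i, c i * φ (x - σ i) with hgdef
      have hgmem : MemLp g 2 μ := by
        have h := memLp_finset_sum' (μ := μ) (p := 2) Finset.univ
          (f := fun i (x : ℚ_[p]) => c i * φ (x - σ i))
          (fun i _ => (htrans (σ i)).const_mul (c i))
        have heq : (∑ i : Fin n, fun x : ℚ_[p] => c i * φ (x - σ i)) = g := by
          ext x; simp [hgdef]
        rwa [heq] at h
      have horthg : ∫ x, f x * (starRingEnd ℂ) (g x) ∂μ = 0 := by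
        have hpt : ∀ x, f x * (starRingEnd ℂ) (g x)
            = ∑ i, (starRingEnd ℂ) (c i) * (f x * (starRingEnd ℂ) (φ (x - σ i))) := by
          intro x
          simp only [hgdef, map_sum, map_mul, Finset.mul_sum]
          exact Finset.sum_congr rfl fun i _ => by ring
        calc ∫ x, f x * (starRingEnd ℂ) (g x) ∂μ
            = ∫ x, ∑ i, (starRingEnd ℂ) (c i) *
                (f x * (starRingEnd ℂ) (φ (x - σ i))) ∂μ := by simp only [hpt]
          _ = ∑ i, ∫ x, (starRingEnd ℂ) (c i) *
                (f x * (starRingEnd ℂ) (φ (x - σ i))) ∂μ :=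
              integral_finset_sum _ fun i _ =>
                (aux_integrable_mul hf (htrans (σ i))).const_mul _
          _ = 0 := Finset.sum_eq_zero fun i _ => by
              rw [integral_const_mul, horth (σ i) (hσ i), mul_zero]
      have hsub : MemLp (fun x => f x - g x) 2 μ := hf.sub hgmem
      have hsplit : ∫ x, f x * (starRingEnd ℂ) (f x - g x) ∂μ = (N : ℂ) := by
        have hpt : ∀ x, f x * (starRingEnd ℂ) (f x - g x)
            = f x * (starRingEnd ℂ) (f x) - f x * (starRingEnd ℂ) (g x) := fun x => by
          rw [map_sub]; ring
        simp only [hpt]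
        rw [integral_sub (aux_integrable_mul hf hf) (aux_integrable_mul hf hgmem),
          hfN, horthg, sub_zero]
      have hCS := aux_cs hf hsub
      have h1 : N = ‖∫ x, f x * (starRingEnd ℂ) (f x - g x) ∂μ‖ := by
        rw [hsplit, Complex.norm_real, Real.norm_of_nonneg hNnonneg]
      calc N = ‖∫ x, f x * (starRingEnd ℂ) (f x - g x) ∂μ‖ := h1
        _ ≤ Real.sqrt N * Real.sqrt (∫ x, ‖f x - g x‖ ^ 2 ∂μ) := hCS
        _ ≤ Real.sqrt N * Real.sqrt ε :=
            mul_le_mul_of_nonneg_left (Real.sqrt_le_sqrt happ.le) (Real.sqrt_nonneg _)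
    have hN0 : N = 0 := by
      by_contra h
      have hNpos : 0 < N := lt_of_le_of_ne hNnonneg (Ne.symm h)
      have hk := key (N / 4) (by positivity)
      rw [← Real.sqrt_mul hNnonneg, show N * (N / 4) = (N / 2) ^ 2 by ring,
        Real.sqrt_sq (by positivity)] at hk
      linarith
    have hint : Integrable (fun x => ‖f x‖ ^ 2) μ := by
      have h := hf.integrable_norm_rpow two_ne_zero ENNReal.ofNat_ne_top
      refine (integrable_congr (Filter.Eventually.of_forall fun x => ?_)).mpr h
      rw [ENNReal.toReal_ofNat, show (2:ℝ) = ((2:ℕ):ℝ) by norm_num, Real.rpow_natCast]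
    have hae := (integral_eq_zero_iff_of_nonneg (fun x => sq_nonneg _) hint).mp hN0
    filter_upwards [hae] with x hx
    have hx' : ‖f x‖ ^ 2 = 0 := hx
    simpa using hx'
end
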